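/- arXiv:2510.00309 — 2 statements merged into one kernel-verified Lean document; each statement's English description precedes it below -/
import Mathlib

section
/- Let (A, D) be a metric space, μ : A → ℝ a 1-Lipschitz function with supremum μ*. Suppose x, y, x* ∈ A with μ(x*) = μ*, numbers r_x, r_y ≥ 0 with |m_x − μ(x)| ≤ r_x and |m_y − μ(y)| ≤ r_y, and D(y, x*) ≤ r_y. If m_x + 2 r_x ≥ m_y + 2 r_y, then μ* − μ(x) ≤ 3 r_x. -/
theorem zooming_selection_gap {A : Type*} [MetricSpace A]
    (μ : A → ℝ) (hLip : LipschitzWith 1 μ)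
    (μstar : ℝ) (hsup : ∀ a, μ a ≤ μstar)
    (x y xstar : A) (hxstar : μ xstar = μstar)
    (rx ry mx my : ℝ) (hrx : 0 ≤ rx) (hry : 0 ≤ ry)
    (hmx : |mx - μ x| ≤ rx) (hmy : |my - μ y| ≤ ry)
    (hcov : dist y xstar ≤ ry)
    (hsel : mx + 2 * rx ≥ my + 2 * ry) :
    μstar - μ x ≤ 3 * rx := by
  have hL : |μ xstar - μ y| ≤ dist y xstar := by
    have := hLip.dist_le_mul xstar y
    rw [Real.dist_eq] at this
    simpa [dist_comm] using this
  rw [abs_sub_le_iff] at hL hmx hmy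
  linarith [hL.1, hmx.1, hmx.2, hmy.1, hmy.2]
end

section
/- Let T be a positive integer and let n_t(x), v_t(x), w_t(x) be natural-number-valued functions with n_t(x) = v_t(x) + w_t(x) for all t and x, and suppose w_t(x) ≤ τ for all t, x (bounded pending feedback). Let Δ : X → [0,1] on a finite set X, suppose ∑_{x∈X} n_T(x) ≤ T, and partition X by dyadic bands X_i = {x : 2^{−i−1} < Δ(x) ≤ 2^{−i}}. If ∑_{x∈X_i} Δ(x) v_T(x) ≤ L·2^{i(d+1)} and |X_i| ≤ c·2^{id} for all i, then for every ρ ∈ (0,1): ∑_{x∈X} Δ(x) n_T(x) ≤ ρT + 2 L ρ^{−(d+1)} + 2 c τ ρ^{−d}. -/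
open scoped Classical in
theorem delayed_zooming_regret_decomposition {α : Type*} (T : ℕ) (hT : 0 < T)
    (X : Finset α) (n v w : ℕ → α → ℕ)
    (hnvw : ∀ t x, n t x = v t x + w t x)
    (τ : ℕ) (hw : ∀ t x, w t x ≤ τ)
    (Δ : α → ℝ) (hΔ : ∀ x ∈ X, Δ x ∈ Set.Icc (0 : ℝ) 1)
    (hpulls : ∑ x ∈ X, n T x ≤ T)
    (L c d : ℝ) (hL : 0 < L) (hc : 0 < c) (hd : 0 ≤ d)
    (hband : ∀ i : ℕ,
      ∑ x ∈ X.filter (fun x => (2 : ℝ) ^ (-(i : ℝ) - 1) < Δ x ∧ Δ x ≤ (2 : ℝ) ^ (-(i : ℝ))),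
        Δ x * v T x ≤ L * (2 : ℝ) ^ ((i : ℝ) * (d + 1)))
    (hcard : ∀ i : ℕ,
      ((X.filter (fun x => (2 : ℝ) ^ (-(i : ℝ) - 1) < Δ x ∧ Δ x ≤ (2 : ℝ) ^ (-(i : ℝ)))).card : ℝ)
        ≤ c * (2 : ℝ) ^ ((i : ℝ) * d)) :
    ∀ ρ ∈ Set.Ioo (0 : ℝ) 1,
      ∑ x ∈ X, Δ x * n T x ≤ ρ * T + 2 * L * ρ ^ (-(d + 1)) + 2 * c * τ * ρ ^ (-d) := by
  intro ρ hρ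
  obtain ⟨hρ0, hρ1⟩ := hρ
  have hρinv1 : (1:ℝ) < ρ⁻¹ := (one_lt_inv₀ hρ0).mpr hρ1
  have hρinv0 : (0:ℝ) < ρ⁻¹ := by positivity
  -- choose J with 2^J ≤ ρ⁻¹ < 2^(J+1)
  have hex : ∃ k : ℕ, ρ⁻¹ < 2 ^ k := pow_unbounded_of_one_lt _ one_lt_two
  have hIspec : ρ⁻¹ < 2 ^ (Nat.find hex) := Nat.find_spec hex
  have hIne : Nat.find hex ≠ 0 := by
    intro h
    rw [h] at hIspec
    norm_num at hIspec
    linarith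
  obtain ⟨J, hJ⟩ := Nat.exists_eq_succ_of_ne_zero hIne
  have hJmin : (2:ℝ) ^ J ≤ ρ⁻¹ := by
    have := Nat.find_min hex (m := J) (by omega)
    push_neg at this
    exact this
  have hJtop : ρ⁻¹ < 2 ^ (J + 1) := by
    rw [hJ] at hIspec
    simpa [Nat.succ_eq_add_one] using hIspec
  set B : ℕ → Finset α := fun i =>
    X.filter (fun x => (2 : ℝ) ^ (-(i : ℝ) - 1) < Δ x ∧ Δ x ≤ (2 : ℝ) ^ (-(i : ℝ))) with hB
  -- basic positivity facts
  have h2pos : ∀ r : ℝ, (0:ℝ) < (2:ℝ) ^ r := fun r => Real.rpow_pos_of_pos two_pos r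
  have hrpow_nat : ∀ i : ℕ, (2:ℝ) ^ (i : ℝ) = (2:ℝ) ^ i := fun i => Real.rpow_natCast 2 i
  have hrpow_neg : ∀ i : ℕ, (2:ℝ) ^ (-(i : ℝ)) = ((2:ℝ)⁻¹) ^ i := by
    intro i
    rw [Real.rpow_neg (by norm_num), hrpow_nat, inv_pow]
  -- split the sum
  have hsplit :
      ∑ x ∈ X, Δ x * n T x
        = ∑ x ∈ X.filter (fun x => Δ x ≤ ρ), Δ x * n T x
          + ∑ x ∈ X.filter (fun x => ¬ Δ x ≤ ρ), Δ x * n T x :=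
    (Finset.sum_filter_add_sum_filter_not X _ _).symm
  -- small-gap part
  have hA : ∑ x ∈ X.filter (fun x => Δ x ≤ ρ), Δ x * n T x ≤ ρ * T := by
    calc ∑ x ∈ X.filter (fun x => Δ x ≤ ρ), Δ x * n T x
        ≤ ∑ x ∈ X.filter (fun x => Δ x ≤ ρ), ρ * n T x := by
          refine Finset.sum_le_sum fun x hx => ?_
          exact mul_le_mul_of_nonneg_right (Finset.mem_filter.mp hx).2 (Nat.cast_nonneg _)
      _ = ρ * ∑ x ∈ X.filter (fun x => Δ x ≤ ρ), (n T x : ℝ) := by rw [Finset.mul_sum]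
      _ ≤ ρ * T := by
          refine mul_le_mul_of_nonneg_left ?_ hρ0.le
          calc ∑ x ∈ X.filter (fun x => Δ x ≤ ρ), (n T x : ℝ)
              ≤ ∑ x ∈ X, (n T x : ℝ) :=
                Finset.sum_le_sum_of_subset_of_nonneg (Finset.filter_subset _ _)
                  (fun _ _ _ => Nat.cast_nonneg _)
            _ ≤ (T : ℝ) := by exact_mod_cast hpulls
  -- big-gap part is covered by bands 0..J
  have hsub : X.filter (fun x => ¬ Δ x ≤ ρ) ⊆ (Finset.range (J + 1)).biUnion B := by
    intro x hx
    obtain ⟨hxX, hxρ⟩ := Finset.mem_filter.mp hx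
    push_neg at hxρ
    obtain ⟨hΔ0, hΔ1⟩ := hΔ x hxX
    have hΔpos : 0 < Δ x := lt_trans hρ0 hxρ
    have hexk : ∃ k : ℕ, (2:ℝ) ^ (-(k : ℝ) - 1) < Δ x := by
      obtain ⟨k, hk⟩ := pow_unbounded_of_one_lt ((Δ x)⁻¹) (one_lt_two (α := ℝ))
      refine ⟨k, ?_⟩
      have h1 : (2:ℝ) ^ (-(k : ℝ)) < Δ x := by
        rw [hrpow_neg]
        rw [inv_pow]
        rw [inv_lt_comm₀ (by positivity) hΔpos]
        exact hk
      refine lt_trans ?_ h1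
      exact Real.rpow_lt_rpow_of_exponent_lt one_lt_two (by linarith)
    set k := Nat.find hexk with hkdef
    have hklow : (2:ℝ) ^ (-(k : ℝ) - 1) < Δ x := Nat.find_spec hexk
    have hkhigh : Δ x ≤ (2:ℝ) ^ (-(k : ℝ)) := by
      rcases Nat.eq_zero_or_pos k with h0 | hpos
      · rw [h0]
        simpa using hΔ1
      · obtain ⟨m, hm⟩ := Nat.exists_eq_succ_of_ne_zero hpos.ne'
        have := Nat.find_min hexk (m := m) (by omega)
        push_neg at this
        have heq : (-(m : ℝ) - 1) = (-(k : ℝ)) := by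
          rw [hm]; push_cast; ring
        rwa [heq] at this
    have hkJ : k < J + 1 := by
      have h2k : (2:ℝ) ^ k < ρ⁻¹ := by
        have h0 : ρ < ((2:ℝ) ^ k)⁻¹ := by
          have : ρ < (2:ℝ) ^ (-(k : ℝ)) := lt_of_lt_of_le hxρ hkhigh
          rwa [hrpow_neg, inv_pow] at this
        have h2kpos : (0:ℝ) < (2:ℝ) ^ k := by positivity
        have h1 : ρ * (2:ℝ) ^ k < 1 := by
          calc ρ * (2:ℝ) ^ k < ((2:ℝ) ^ k)⁻¹ * (2:ℝ) ^ k :=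
                mul_lt_mul_of_pos_right h0 h2kpos
            _ = 1 := inv_mul_cancel₀ h2kpos.ne'
        calc (2:ℝ) ^ k = (ρ * (2:ℝ) ^ k) * ρ⁻¹ := by
              field_simp
          _ < 1 * ρ⁻¹ := mul_lt_mul_of_pos_right h1 hρinv0
          _ = ρ⁻¹ := one_mul _
      have : (2:ℝ) ^ k < (2:ℝ) ^ (J + 1) := lt_trans h2k hJtop
      exact (pow_lt_pow_iff_right₀ (one_lt_two (α := ℝ))).mp this
    refine Finset.mem_biUnion.mpr ⟨k, Finset.mem_range.mpr hkJ, ?_⟩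
    exact Finset.mem_filter.mpr ⟨hxX, hklow, hkhigh⟩
  -- bands are pairwise disjoint
  have hdisjkey : ∀ i j : ℕ, i < j → Disjoint (B i) (B j) := by
    intro i j hlt
    refine Finset.disjoint_left.mpr fun x hxi hxj => ?_
    obtain ⟨_, hi1, hi2⟩ := Finset.mem_filter.mp hxi
    obtain ⟨_, hj1, hj2⟩ := Finset.mem_filter.mp hxj
    have : (2:ℝ) ^ (-(j : ℝ)) ≤ (2:ℝ) ^ (-(i : ℝ) - 1) := by
      apply Real.rpow_le_rpow_of_exponent_le one_le_two
      have : (i : ℝ) + 1 ≤ (j : ℝ) := by exact_mod_cast hlt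
      linarith
    linarith
  have hdisj : (↑(Finset.range (J + 1)) : Set ℕ).PairwiseDisjoint B := by
    intro i _ j _ hij
    rcases hij.lt_or_gt with h | h
    · exact hdisjkey i j h
    · exact (hdisjkey j i h).symm
  -- per-band bound
  have hbandsum : ∀ i : ℕ, ∑ x ∈ B i, Δ x * n T x
      ≤ L * (2:ℝ) ^ ((i:ℝ) * (d + 1)) + c * τ * ((2:ℝ) ^ ((i:ℝ) * d) * (2:ℝ) ^ (-(i:ℝ))) := by
    intro i
    have hsum : ∑ x ∈ B i, Δ x * n T x
        = ∑ x ∈ B i, Δ x * v T x + ∑ x ∈ B i, Δ x * w T x := by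
      rw [← Finset.sum_add_distrib]
      refine Finset.sum_congr rfl fun x _ => ?_
      rw [hnvw T x]; push_cast; ring
    rw [hsum]
    refine add_le_add (hband i) ?_
    calc ∑ x ∈ B i, Δ x * w T x
        ≤ (B i).card • ((2:ℝ) ^ (-(i:ℝ)) * τ) := by
          refine Finset.sum_le_card_nsmul _ _ _ fun x hx => ?_
          obtain ⟨hxX, _, hx2⟩ := Finset.mem_filter.mp hx
          exact mul_le_mul hx2 (Nat.cast_le.mpr (hw T x)) (Nat.cast_nonneg _) (h2pos _).le
      _ = ((B i).card : ℝ) * ((2:ℝ) ^ (-(i:ℝ)) * τ) := by rw [nsmul_eq_mul]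
      _ ≤ (c * (2:ℝ) ^ ((i:ℝ) * d)) * ((2:ℝ) ^ (-(i:ℝ)) * τ) := by
          refine mul_le_mul_of_nonneg_right (hcard i) ?_
          positivity
      _ = c * τ * ((2:ℝ) ^ ((i:ℝ) * d) * (2:ℝ) ^ (-(i:ℝ))) := by ring
  -- bound each band term uniformly
  have hkey : ∀ i ∈ Finset.range (J + 1),
      L * (2:ℝ) ^ ((i:ℝ) * (d + 1)) + c * τ * ((2:ℝ) ^ ((i:ℝ) * d) * (2:ℝ) ^ (-(i:ℝ)))
        ≤ L * ((2:ℝ) ^ ((J:ℝ) * d) * (2:ℝ)^i) + c * τ * ((2:ℝ) ^ ((J:ℝ) * d) * ((2:ℝ)⁻¹)^i) := by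
    intro i hi
    have hiJ : (i:ℝ) ≤ (J:ℝ) := by exact_mod_cast Nat.lt_succ_iff.mp (Finset.mem_range.mp hi)
    have hmono : (2:ℝ) ^ ((i:ℝ) * d) ≤ (2:ℝ) ^ ((J:ℝ) * d) :=
      Real.rpow_le_rpow_of_exponent_le one_le_two (mul_le_mul_of_nonneg_right hiJ hd)
    have h1 : (2:ℝ) ^ ((i:ℝ) * (d + 1)) = (2:ℝ) ^ ((i:ℝ) * d) * (2:ℝ)^i := by
      rw [← hrpow_nat, ← Real.rpow_add two_pos]
      ring_nf
    refine add_le_add ?_ ?_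
    · rw [h1]
      refine mul_le_mul_of_nonneg_left ?_ hL.le
      exact mul_le_mul_of_nonneg_right hmono (by positivity)
    · rw [hrpow_neg]
      refine mul_le_mul_of_nonneg_left ?_ (by positivity)
      exact mul_le_mul_of_nonneg_right hmono (by positivity)
  -- geometric sums
  have hgeom1 : ∑ i ∈ Finset.range (J + 1), (2:ℝ)^i ≤ 2 * 2^J := by
    rw [geom_sum_eq (by norm_num : (2:ℝ) ≠ 1)]
    have : (2:ℝ)^(J+1) = 2 * 2^J := by ring
    rw [this]
    norm_num
  have hgeom2 : ∑ i ∈ Finset.range (J + 1), ((2:ℝ)⁻¹)^i ≤ 2 := by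
    rw [geom_sum_eq (by norm_num : (2:ℝ)⁻¹ ≠ 1)]
    have hpow : (0:ℝ) ≤ ((2:ℝ)⁻¹)^(J+1) := by positivity
    rw [div_le_iff_of_neg (by norm_num : ((2:ℝ)⁻¹ - 1) < 0)]
    linarith
  -- final rpow comparisons
  have hJd : (2:ℝ) ^ ((J:ℝ) * d) ≤ ρ ^ (-d) := by
    have h1 : (2:ℝ) ^ ((J:ℝ) * d) = ((2:ℝ)^J) ^ d := by
      rw [Real.rpow_mul (by norm_num), hrpow_nat]
    have h2 : ρ ^ (-d) = (ρ⁻¹) ^ d := by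
      rw [Real.rpow_neg hρ0.le, ← Real.inv_rpow hρ0.le]
    rw [h1, h2]
    exact Real.rpow_le_rpow (by positivity) hJmin hd
  have hJ1 : (2:ℝ) ^ J ≤ ρ ^ (-1:ℝ) := by
    rw [Real.rpow_neg_one]; exact hJmin
  have hfinal1 : L * ((2:ℝ) ^ ((J:ℝ) * d)) * (2 * 2^J) ≤ 2 * L * ρ ^ (-(d+1)) := by
    have : ρ ^ (-(d+1)) = ρ ^ (-d) * ρ ^ (-1:ℝ) := by
      rw [← Real.rpow_add hρ0]; ring_nf
    rw [this]
    have := mul_le_mul (mul_le_mul_of_nonneg_left hJd hL.le) hJ1 (by positivity)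
      (by positivity : (0:ℝ) ≤ L * ρ ^ (-d))
    nlinarith [this]
  have hfinal2 : c * τ * ((2:ℝ) ^ ((J:ℝ) * d)) * 2 ≤ 2 * c * τ * ρ ^ (-d) := by
    have := mul_le_mul_of_nonneg_left hJd (by positivity : (0:ℝ) ≤ c * τ)
    nlinarith [this]
  -- assemble
  have hBpart : ∑ x ∈ X.filter (fun x => ¬ Δ x ≤ ρ), Δ x * n T x
      ≤ 2 * L * ρ ^ (-(d+1)) + 2 * c * τ * ρ ^ (-d) := by
    have hsub2 : ∑ x ∈ X.filter (fun x => ¬ Δ x ≤ ρ), Δ x * n T x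
        ≤ ∑ x ∈ (Finset.range (J + 1)).biUnion B, Δ x * n T x := by
      refine Finset.sum_le_sum_of_subset_of_nonneg hsub fun x hx _ => ?_
      have hxX : x ∈ X := by
        obtain ⟨i, _, hxi⟩ := Finset.mem_biUnion.mp hx
        exact Finset.mem_filter.mp hxi |>.1
      exact mul_nonneg (hΔ x hxX).1 (Nat.cast_nonneg _)
    calc ∑ x ∈ X.filter (fun x => ¬ Δ x ≤ ρ), Δ x * n T x
        ≤ ∑ x ∈ (Finset.range (J + 1)).biUnion B, Δ x * n T x := hsub2
      _ = ∑ i ∈ Finset.range (J + 1), ∑ x ∈ B i, Δ x * n T x :=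
          Finset.sum_biUnion hdisj
      _ ≤ ∑ i ∈ Finset.range (J + 1),
            (L * (2:ℝ) ^ ((i:ℝ) * (d + 1)) + c * τ * ((2:ℝ) ^ ((i:ℝ) * d) * (2:ℝ) ^ (-(i:ℝ)))) :=
          Finset.sum_le_sum fun i _ => hbandsum i
      _ ≤ ∑ i ∈ Finset.range (J + 1),
            (L * ((2:ℝ) ^ ((J:ℝ) * d) * (2:ℝ)^i) + c * τ * ((2:ℝ) ^ ((J:ℝ) * d) * ((2:ℝ)⁻¹)^i)) :=
          Finset.sum_le_sum hkey
      _ = L * (2:ℝ) ^ ((J:ℝ) * d) * (∑ i ∈ Finset.range (J + 1), (2:ℝ)^i)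
          + c * τ * (2:ℝ) ^ ((J:ℝ) * d) * (∑ i ∈ Finset.range (J + 1), ((2:ℝ)⁻¹)^i) := by
          rw [Finset.sum_add_distrib, Finset.mul_sum, Finset.mul_sum]
          congr 1 <;> exact Finset.sum_congr rfl fun i _ => by ring
      _ ≤ L * (2:ℝ) ^ ((J:ℝ) * d) * (2 * 2^J) + c * τ * (2:ℝ) ^ ((J:ℝ) * d) * 2 := by
          refine add_le_add ?_ ?_
          · exact mul_le_mul_of_nonneg_left hgeom1 (by positivity)
          · exact mul_le_mul_of_nonneg_left hgeom2 (by positivity)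
      _ ≤ 2 * L * ρ ^ (-(d+1)) + 2 * c * τ * ρ ^ (-d) := add_le_add hfinal1 hfinal2
  rw [hsplit]
  linarith
end
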